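/- For every n ≥ 1, the QBF P_n.(φ_n ∧ ψ_n), where P_n.φ_n = KBKF_n and ψ_n = (x̄_1∨y_1) ∧ … ∧ (x̄_n∨y_n), has a Q-Res refutation (derivation of the empty clause using rules A, R, U) of length at most 4n (not counting applications of the axiom rule A). -/
import Mathlib


/-! Generic framework for QBFs in prenex CNF. -/

inductive Q
  | ex
  | all
deriving DecidableEq

abbrev Lit (V : Type) := V × Bool
abbrev Clause (V : Type) := Finset (Lit V)
abbrev Cnf (V : Type) := Finset (Clause V)
abbrev QPrefix (V : Type) := List (Q × V)

variable {V : Type} [DecidableEq V]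

/-- Negation of a literal. -/
def negLit (l : Lit V) : Lit V := (l.1, !l.2)

/-- Evaluation of a literal under an assignment. -/
def evalLit (τ : V → Bool) (l : Lit V) : Bool := if l.2 then τ l.1 else !(τ l.1)

/-- An assignment satisfies a clause if some literal evaluates to true. -/
def SatClause (τ : V → Bool) (C : Clause V) : Prop := ∃ l ∈ C, evalLit τ l = true

/-- An assignment satisfies a CNF if it satisfies all clauses. -/
def SatCnf (τ : V → Bool) (φ : Cnf V) : Prop := ∀ C ∈ φ, SatClause τ C

/-- Recursive semantics of a quantifier prefix over a matrix predicate. -/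
def QTrue : QPrefix V → (V → Bool) → ((V → Bool) → Prop) → Prop
  | [], τ, M => M τ
  | (Q.ex, v) :: P, τ, M => ∃ b, QTrue P (Function.update τ v b) M
  | (Q.all, v) :: P, τ, M => ∀ b, QTrue P (Function.update τ v b) M

/-- Truth of a prenex CNF QBF (closed; the default assignment is irrelevant). -/
def QBFTrue (P : QPrefix V) (φ : Cnf V) : Prop :=
  QTrue P (fun _ => false) (fun τ => SatCnf τ φ)

/-- Two variables are in the same quantifier block of a prefix. -/
def SameBlock (P : QPrefix V) (v w : V) : Prop :=
  ∃ i j : ℕ, (∃ q : Q, P[i]? = some (q, v)) ∧ (∃ q : Q, P[j]? = some (q, w)) ∧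
    ∀ (k₁ k₂ : ℕ) (e₁ e₂ : Q × V), min i j ≤ k₁ → k₁ ≤ k₂ → k₂ ≤ max i j →
      P[k₁]? = some e₁ → P[k₂]? = some e₂ → e₁.1 = e₂.1

/-- An admissible literal map for a prefix: a bijection on literals commuting with
negation and moving variables only within their quantifier block. -/
structure Admissible (P : QPrefix V) (σ : Lit V → Lit V) : Prop where
  bij : Function.Bijective σ
  neg : ∀ l, σ (negLit l) = negLit (σ l)
  block : ∀ v w b c, σ (v, b) = (w, c) → v ≠ w → SameBlock P v w

/-- Action of a literal map on a clause. -/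
def mapClause (σ : Lit V → Lit V) (C : Clause V) : Clause V := C.image σ

/-- A (syntactic) symmetry of a QBF: an admissible map sending the clause set to itself. -/
def IsSymmetry (P : QPrefix V) (φ : Cnf V) (σ : Lit V → Lit V) : Prop :=
  Admissible P σ ∧ φ.image (mapClause σ) = φ

def IsExist (P : QPrefix V) (v : V) : Prop := (Q.ex, v) ∈ P
def IsUniv (P : QPrefix V) (v : V) : Prop := (Q.all, v) ∈ P

/-- A clause is a tautology if it contains complementary literals. -/
def Tauto (C : Clause V) : Prop := ∃ l ∈ C, negLit l ∈ C

/-- Rule R of Q-Res: resolution over an existential variable, with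
non-tautological resolvent. -/
def ResStep (P : QPrefix V) (E₁ E₂ E : Clause V) : Prop :=
  ∃ x, IsExist P x ∧ (x, true) ∈ E₁ ∧ (x, false) ∈ E₂ ∧
    E = E₁.erase (x, true) ∪ E₂.erase (x, false) ∧ ¬ Tauto E

/-- Prefix order on variables: `v` occurs strictly before `w`. -/
def LtP (P : QPrefix V) (v w : V) : Prop :=
  ∃ i j : ℕ, i < j ∧ (∃ q : Q, P[i]? = some (q, v)) ∧ (∃ q : Q, P[j]? = some (q, w))

/-- Rule U of Q-Res: universal reduction. -/
def URed (P : QPrefix V) (F₁ F : Clause V) : Prop :=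
  ∃ l, IsUniv P l.1 ∧ l ∈ F₁ ∧ negLit l ∉ F₁ ∧ F = F₁.erase l ∧
    ∀ k ∈ F₁.erase l, IsExist P k.1 → LtP P k.1 l.1

/-- Derivability in Q-Res (rules A, R, U). -/
inductive Derives (P : QPrefix V) (φ : Cnf V) : Clause V → Prop
  | ax {C : Clause V} : C ∈ φ → Derives P φ C
  | res {E₁ E₂ E : Clause V} :
      Derives P φ E₁ → Derives P φ E₂ → ResStep P E₁ E₂ E → Derives P φ E
  | ured {F₁ F : Clause V} : Derives P φ F₁ → URed P F₁ F → Derives P φ F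

/-- Derivability in Q-Res+S (rules A, R, U, S). -/
inductive DerivesS (P : QPrefix V) (φ : Cnf V) : Clause V → Prop
  | ax {C : Clause V} : C ∈ φ → DerivesS P φ C
  | res {E₁ E₂ E : Clause V} :
      DerivesS P φ E₁ → DerivesS P φ E₂ → ResStep P E₁ E₂ E → DerivesS P φ E
  | ured {F₁ F : Clause V} : DerivesS P φ F₁ → URed P F₁ F → DerivesS P φ F
  | sym {C : Clause V} {σ : Lit V → Lit V} :
      DerivesS P φ C → IsSymmetry P φ σ → DerivesS P φ (mapClause σ C)

/-- A clause available at step `i` of a derivation sequence: an input clause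
(axiom rule A, not counted as a step) or an earlier line. -/
def Avail (φ : Cnf V) (D : List (Clause V)) (i : ℕ) (C : Clause V) : Prop :=
  C ∈ φ ∨ ∃ j, ∃ _ : j < i, ∃ hj : j < D.length, D[j]'hj = C

/-- Line `C` at position `i` is justified by rule R or U from available clauses. -/
def StepOK (P : QPrefix V) (φ : Cnf V) (D : List (Clause V)) (i : ℕ) (C : Clause V) : Prop :=
  (∃ E₁ E₂, Avail φ D i E₁ ∧ Avail φ D i E₂ ∧ ResStep P E₁ E₂ C) ∨
  (∃ F₁, Avail φ D i F₁ ∧ URed P F₁ C)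

/-- Line justified by rule R, U or the symmetry rule S. -/
def StepOKS (P : QPrefix V) (φ : Cnf V) (D : List (Clause V)) (i : ℕ) (C : Clause V) : Prop :=
  StepOK P φ D i C ∨
  (∃ F₁ σ, Avail φ D i F₁ ∧ IsSymmetry P φ σ ∧ C = mapClause σ F₁)

/-- A Q-Res refutation, as a sequence of R/U steps ending in the empty clause;
its length is the number of R and U applications. -/
def IsRefutation (P : QPrefix V) (φ : Cnf V) (D : List (Clause V)) : Prop :=
  (∀ i (hi : i < D.length), StepOK P φ D i (D[i]'hi)) ∧ D.getLast? = some (∅ : Clause V)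

/-- A Q-Res+S refutation. -/
def IsRefutationS (P : QPrefix V) (φ : Cnf V) (D : List (Clause V)) : Prop :=
  (∀ i (hi : i < D.length), StepOKS P φ D i (D[i]'hi)) ∧ D.getLast? = some (∅ : Clause V)

/-- A derivation sequence using rules A, R, U: every line is an input clause or
follows from earlier lines by R or U. -/
def IsDerivation (P : QPrefix V) (φ : Cnf V) (D : List (Clause V)) : Prop :=
  ∀ i (hi : i < D.length), (D[i]'hi) ∈ φ ∨
    (∃ j k, ∃ hj : j < i, ∃ hk : k < i,
      ResStep P (D[j]'(Nat.lt_trans hj hi)) (D[k]'(Nat.lt_trans hk hi)) (D[i]'hi)) ∨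
    (∃ j, ∃ hj : j < i, URed P (D[j]'(Nat.lt_trans hj hi)) (D[i]'hi))

/-! The KBKF formula family (variables indexed 1..n). -/

inductive KV
  | x (i : ℕ)
  | y (i : ℕ)
  | a (i : ℕ)
  | z (i : ℕ)
deriving DecidableEq

/-- Prefix ∃x₁y₁∀a₁ … ∃xₙyₙ∀aₙ ∃z₁…zₙ. -/
def kPrefix (n : ℕ) : QPrefix KV :=
  ((List.range n).flatMap
    (fun j => [(Q.ex, KV.x (j+1)), (Q.ex, KV.y (j+1)), (Q.all, KV.a (j+1))])) ++
  (List.range n).map (fun j => (Q.ex, KV.z (j+1)))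

/-- The tail z̄₁ ∨ … ∨ z̄ₙ. -/
def kZneg (n : ℕ) : Clause KV := (Finset.range n).image (fun j => ((KV.z (j+1), false) : Lit KV))

/-- The clauses of KBKF_n. -/
def kbkf (n : ℕ) : Cnf KV :=
  {({(KV.x 1, false), (KV.y 1, false)} : Clause KV)} ∪
  ((Finset.range (n-1)).image (fun j =>
    ({(KV.x (j+1), true), (KV.a (j+1), false), (KV.x (j+2), false), (KV.y (j+2), false)} : Clause KV))) ∪
  ((Finset.range (n-1)).image (fun j =>
    ({(KV.y (j+1), true), (KV.a (j+1), true), (KV.x (j+2), false), (KV.y (j+2), false)} : Clause KV))) ∪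
  {({(KV.x n, true), (KV.a n, false)} : Clause KV) ∪ kZneg n,
   ({(KV.y n, true), (KV.a n, true)} : Clause KV) ∪ kZneg n} ∪
  ((Finset.range n).image (fun j => ({(KV.a (j+1), true), (KV.z (j+1), true)} : Clause KV))) ∪
  ((Finset.range n).image (fun j => ({(KV.a (j+1), false), (KV.z (j+1), true)} : Clause KV)))

/-- The symmetry σᵢ = (xᵢ yᵢ)(x̄ᵢ ȳᵢ)(aᵢ āᵢ) of KBKF_n. -/
def kSigma (i : ℕ) : Lit KV → Lit KV
  | (KV.x j, b) => if j = i then (KV.y j, b) else (KV.x j, b)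
  | (KV.y j, b) => if j = i then (KV.x j, b) else (KV.y j, b)
  | (KV.a j, b) => if j = i then (KV.a j, !b) else (KV.a j, b)
  | (KV.z j, b) => (KV.z j, b)

/-- The symmetry breaker ψₙ = (x̄₁∨y₁) ∧ … ∧ (x̄ₙ∨yₙ) for KBKF_n. -/
def kPsi (n : ℕ) : Cnf KV :=
  (Finset.range n).image (fun j => ({(KV.x (j+1), false), (KV.y (j+1), true)} : Clause KV))

/-! The QUPARITY formula family. -/

inductive PV
  | x (i : ℕ)
  | a (i : ℕ)
  | y (i : ℕ)
deriving DecidableEq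

/-- Prefix ∃x₁…xₙ ∀a₁a₂ ∃y₂…yₙ. -/
def pPrefix (n : ℕ) : QPrefix PV :=
  (List.range n).map (fun j => ((Q.ex, PV.x (j+1)) : Q × PV)) ++
  [(Q.all, PV.a 1), (Q.all, PV.a 2)] ++
  (List.range (n-1)).map (fun k => ((Q.ex, PV.y (k+2)) : Q × PV))

/-- a₁ ∨ a₂ with sign `s` (s = true: unprimed clauses, s = false: primed clauses). -/
def pAA (s : Bool) : Clause PV := {(PV.a 1, s), (PV.a 2, s)}

/-- The clauses of QUPARITY_n. -/
def quparity (n : ℕ) : Cnf PV :=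
  ((Finset.univ : Finset Bool).biUnion (fun s =>
    ({({(PV.x 1, false), (PV.x 2, false), (PV.y 2, false)} : Clause PV) ∪ pAA s,
      ({(PV.x 1, false), (PV.x 2, true), (PV.y 2, true)} : Clause PV) ∪ pAA s,
      ({(PV.x 1, true), (PV.x 2, false), (PV.y 2, true)} : Clause PV) ∪ pAA s,
      ({(PV.x 1, true), (PV.x 2, true), (PV.y 2, false)} : Clause PV) ∪ pAA s} : Cnf PV) ∪
    ((Finset.range (n-2)).biUnion (fun k =>
      ({({(PV.y (k+2), false), (PV.x (k+3), false), (PV.y (k+3), false)} : Clause PV) ∪ pAA s,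
        ({(PV.y (k+2), false), (PV.x (k+3), true), (PV.y (k+3), true)} : Clause PV) ∪ pAA s,
        ({(PV.y (k+2), true), (PV.x (k+3), false), (PV.y (k+3), true)} : Clause PV) ∪ pAA s,
        ({(PV.y (k+2), true), (PV.x (k+3), true), (PV.y (k+3), false)} : Clause PV) ∪ pAA s} : Cnf PV))))) ∪
  {({(PV.a 1, true), (PV.a 2, true), (PV.y n, true)} : Clause PV),
   ({(PV.a 1, false), (PV.a 2, false), (PV.y n, false)} : Clause PV)}

/-- The symmetry σ₁ = (x₁ x₂)(x̄₁ x̄₂) of QUPARITY_n. -/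
def pSigma1 : Lit PV → Lit PV
  | (PV.x 1, b) => (PV.x 2, b)
  | (PV.x 2, b) => (PV.x 1, b)
  | l => l

/-- The symmetry σᵢ = (xᵢ x̄ᵢ)(a₁ ā₁)(a₂ ā₂)(yᵢ ȳᵢ)⋯(yₙ ȳₙ) of QUPARITY_n, 2 ≤ i ≤ n. -/
def pSigma (n i : ℕ) : Lit PV → Lit PV
  | (PV.x j, b) => if j = i then (PV.x j, !b) else (PV.x j, b)
  | (PV.a j, b) => if j = 1 ∨ j = 2 then (PV.a j, !b) else (PV.a j, b)
  | (PV.y j, b) => if i ≤ j ∧ j ≤ n then (PV.y j, !b) else (PV.y j, b)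

/-- The symmetry breaker ψₙ = (x̄₁ ∨ x₂) ∧ x̄₂ ∧ … ∧ x̄ₙ for QUPARITY_n. -/
def pPsi (n : ℕ) : Cnf PV :=
  {({(PV.x 1, false), (PV.x 2, true)} : Clause PV)} ∪
  (Finset.range (n-1)).image (fun k => ({(PV.x (k+2), false)} : Clause PV))

/-! The modified family KBKF'_n with blocking universal variables b_j. -/

inductive KV2
  | x (i : ℕ)
  | b (i : ℕ)
  | y (i : ℕ)
  | a (i : ℕ)
  | z (i : ℕ)
deriving DecidableEq

/-- Prefix ∃x₁∀b₁∃y₁∀a₁ … ∃xₙ∀bₙ∃yₙ∀aₙ ∃z₁…zₙ of KBKF'_n. -/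
def k2Prefix (n : ℕ) : QPrefix KV2 :=
  ((List.range n).flatMap
    (fun j => [(Q.ex, KV2.x (j+1)), (Q.all, KV2.b (j+1)),
               (Q.ex, KV2.y (j+1)), (Q.all, KV2.a (j+1))])) ++
  (List.range n).map (fun j => (Q.ex, KV2.z (j+1)))

/-- The map σᵢ = (xᵢ yᵢ)(x̄ᵢ ȳᵢ)(aᵢ āᵢ) on the literals of KBKF'_n. -/
def k2Sigma (i : ℕ) : Lit KV2 → Lit KV2
  | (KV2.x j, c) => if j = i then (KV2.y j, c) else (KV2.x j, c)
  | (KV2.y j, c) => if j = i then (KV2.x j, c) else (KV2.y j, c)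
  | (KV2.a j, c) => if j = i then (KV2.a j, !c) else (KV2.a j, c)
  | (KV2.b j, c) => (KV2.b j, c)
  | (KV2.z j, c) => (KV2.z j, c)

namespace KBKFAux

/-- literal ā_k -/
def lA (k : ℕ) : Lit KV := (KV.a k, false)

/-- clause ā_1 ∨ … ∨ ā_k -/
def Abar (k : ℕ) : Clause KV := (Finset.Icc 1 k).image lA

/-- clause z̄_m ∨ … ∨ z̄_n -/
def Zseg (m n : ℕ) : Clause KV :=
  (Finset.Icc m n).image (fun k => ((KV.z k, false) : Lit KV))

def Wcl (n m : ℕ) : Clause KV :=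
  insert (KV.x n, true) (insert (KV.a n, false) (Abar m ∪ Zseg (m+1) n))

def Ecl (j : ℕ) : Clause KV :=
  {(KV.x j, true), (KV.a j, false), (KV.x (j+1), false)}

def Vcl (n j : ℕ) : Clause KV := insert (KV.x j, true) (Abar n)

def fcl (n i : ℕ) : Clause KV :=
  if i < n then Wcl n (i+1)
  else if i < 3*n-2 then
    (if (i-n) % 2 = 0 then Ecl (n-1-(i-n)/2) else Vcl n (n-1-(i-n)/2))
  else if i = 3*n-2 then {((KV.x 1, false) : Lit KV)}
  else Abar (4*n-1-i)


lemma L2 {n i : ℕ} (h : i < n) :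
    ({(KV.a (i+1), false), (KV.z (i+1), true)} : Clause KV).erase (KV.z (i+1), true)
      ∪ (Wcl n i).erase (KV.z (i+1), false) = Wcl n (i+1) := by
  ext ⟨v, b⟩
  rcases v with k|k|k|k <;> rcases b <;>
    simp [Wcl, Abar, Zseg, lA, Prod.ext_iff] <;> omega

lemma L3 {n : ℕ} (h : 1 ≤ n) : Wcl n n = Vcl n n := by
  ext ⟨v, b⟩
  rcases v with k|k|k|k <;> rcases b <;>
    simp [Wcl, Vcl, Abar, Zseg, lA, Prod.ext_iff] <;> omega

lemma L4 (j : ℕ) :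
    ({(KV.x (j+1), false), (KV.y (j+1), true)} : Clause KV).erase (KV.y (j+1), true)
      ∪ ({(KV.x j, true), (KV.a j, false), (KV.x (j+1), false),
          (KV.y (j+1), false)} : Clause KV).erase (KV.y (j+1), false) = Ecl j := by
  ext ⟨v, b⟩
  rcases v with k|k|k|k <;> rcases b <;>
    simp [Ecl, Prod.ext_iff] <;> omega

lemma L5 {n j : ℕ} (h1 : 1 ≤ j) (h2 : j ≤ n) :
    (Vcl n (j+1)).erase (KV.x (j+1), true)
      ∪ (Ecl j).erase (KV.x (j+1), false) = Vcl n j := by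
  ext ⟨v, b⟩
  rcases v with k|k|k|k <;> rcases b <;>
    simp [Vcl, Ecl, Abar, lA, Prod.ext_iff] <;> omega

lemma L6 :
    ({(KV.x 1, false), (KV.y 1, true)} : Clause KV).erase (KV.y 1, true)
      ∪ ({(KV.x 1, false), (KV.y 1, false)} : Clause KV).erase (KV.y 1, false)
      = ({((KV.x 1, false) : Lit KV)} : Clause KV) := by
  decide

lemma L7 {n : ℕ} :
    (Vcl n 1).erase (KV.x 1, true)
      ∪ (({((KV.x 1, false) : Lit KV)} : Clause KV)).erase (KV.x 1, false)
      = Abar n := by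
  ext ⟨v, b⟩
  rcases v with k|k|k|k <;> rcases b <;>
    simp [Vcl, Abar, lA, Prod.ext_iff]

lemma L8 {k : ℕ} : (Abar k).erase (KV.a k, false) = Abar (k - 1) := by
  ext ⟨v, b⟩
  rcases v with i|i|i|i <;> rcases b <;>
    simp [Abar, lA, Prod.ext_iff] <;> omega

lemma not_tauto_of_pol {C : Clause KV} (pol : KV → Bool)
    (h : ∀ l ∈ C, l.2 = pol l.1) : ¬ Tauto C := by
  rintro ⟨l, hl, hn⟩
  have h1 := h l hl
  have h2 := h _ hn
  simp only [negLit] at h2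
  rw [h1] at h2
  simp at h2




lemma nt_single : ¬ Tauto ({((KV.x 1, false) : Lit KV)} : Clause KV) := by
  apply not_tauto_of_pol (fun _ => false)
  rintro ⟨v, b⟩ hl
  simp [Prod.ext_iff] at hl
  simp [hl.2]



lemma kZneg_eq (n : ℕ) : kZneg n = Zseg 1 n := by
  ext l
  simp only [kZneg, Zseg, Finset.mem_image, Finset.mem_range, Finset.mem_Icc]
  constructor
  · rintro ⟨j, hj, rfl⟩; exact ⟨j+1, by omega, rfl⟩
  · rintro ⟨k, hk, rfl⟩
    exact ⟨k-1, by omega, by rw [Nat.sub_add_cancel hk.1]⟩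

lemma L1 (n : ℕ) :
    Wcl n 0 = ({(KV.x n, true), (KV.a n, false)} : Clause KV) ∪ kZneg n := by
  rw [Wcl, show Abar 0 = ∅ from by simp [Abar], Finset.empty_union, kZneg_eq]
  congr 1

lemma nt_W {n m : ℕ} : ¬ Tauto (Wcl n m) := by
  apply not_tauto_of_pol (fun v => match v with | KV.x _ => true | _ => false)
  rintro ⟨v, b⟩ hl
  rcases v with k|k|k|k <;> rcases b <;>
    simp [Wcl, Abar, Zseg, lA, Prod.ext_iff] at hl ⊢

lemma nt_E {j : ℕ} : ¬ Tauto (Ecl j) := by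
  apply not_tauto_of_pol (fun v => match v with | KV.x i => decide (i = j) | _ => false)
  rintro ⟨v, b⟩ hl
  rcases v with k|k|k|k <;> rcases b <;>
    simp [Ecl, Prod.ext_iff] at hl ⊢ <;> omega

lemma nt_V {n j : ℕ} : ¬ Tauto (Vcl n j) := by
  apply not_tauto_of_pol (fun v => match v with | KV.x _ => true | _ => false)
  rintro ⟨v, b⟩ hl
  rcases v with k|k|k|k <;> rcases b <;>
    simp [Vcl, Abar, lA, Prod.ext_iff] at hl ⊢

lemma nt_Abar {k : ℕ} : ¬ Tauto (Abar k) := by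
  apply not_tauto_of_pol (fun _ => false)
  rintro ⟨v, b⟩ hl
  rcases v with i|i|i|i <;> rcases b <;>
    simp [Abar, lA, Prod.ext_iff] at hl ⊢

lemma fcl_eq_W {n i : ℕ} (h : i < n) : fcl n i = Wcl n (i+1) := by
  simp [fcl, h]

lemma fcl_eq_E {n j : ℕ} (h1 : 1 ≤ j) (h2 : j ≤ n - 1) (hn : 2 ≤ n) :
    fcl n (n + 2*(n-1-j)) = Ecl j := by
  have e1 : ¬ (n + 2*(n-1-j) < n) := by omega
  have e2 : n + 2*(n-1-j) < 3*n-2 := by omega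
  have e3 : n + 2*(n-1-j) - n = 2*(n-1-j) := by omega
  have e4 : (2*(n-1-j)) % 2 = 0 := by omega
  have e5 : (2*(n-1-j))/2 = n-1-j := by omega
  rw [fcl, if_neg e1, if_pos e2, e3, e4, e5]
  rw [if_pos rfl, show n-1-(n-1-j) = j by omega]

lemma fcl_eq_V {n j : ℕ} (h1 : 1 ≤ j) (h2 : j ≤ n - 1) (hn : 2 ≤ n) :
    fcl n (n + 2*(n-1-j) + 1) = Vcl n j := by
  have e1 : ¬ (n + 2*(n-1-j) + 1 < n) := by omega
  have e2 : n + 2*(n-1-j) + 1 < 3*n-2 := by omega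
  have e3 : n + 2*(n-1-j) + 1 - n = 2*(n-1-j) + 1 := by omega
  have e4 : (2*(n-1-j)+1) % 2 = 1 := by omega
  have e5 : (2*(n-1-j)+1)/2 = n-1-j := by omega
  rw [fcl, if_neg e1, if_pos e2, e3, e4, e5]
  simp only [if_neg (by omega : ¬ (1 = 0))]
  rw [show n-1-(n-1-j) = j by omega]

lemma fcl_eq_xbar {n : ℕ} (h : 1 ≤ n) :
    fcl n (3*n-2) = ({((KV.x 1, false) : Lit KV)} : Clause KV) := by
  have e1 : ¬ (3*n-2 < n) := by omega
  have e2 : ¬ (3*n-2 < 3*n-2) := by omega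
  rw [fcl, if_neg e1, if_neg e2, if_pos rfl]

lemma fcl_eq_Abar {n i : ℕ} (h1 : 3*n-1 ≤ i) (h2 : 1 ≤ n) :
    fcl n i = Abar (4*n-1-i) := by
  have e1 : ¬ (i < n) := by omega
  have e2 : ¬ (i < 3*n-2) := by omega
  have e3 : ¬ (i = 3*n-2) := by omega
  rw [fcl, if_neg e1, if_neg e2, if_neg e3]

lemma mem_kbkf_C2n {n : ℕ} : Wcl n 0 ∈ kbkf n := by
  rw [L1, kbkf]
  simp only [Finset.mem_union, Finset.mem_insert, Finset.mem_singleton]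
  tauto

lemma mem_kbkf_B {n m : ℕ} (h1 : 1 ≤ m) (h2 : m ≤ n) :
    ({(KV.a m, false), (KV.z m, true)} : Clause KV) ∈ kbkf n := by
  rw [kbkf]
  apply Finset.mem_union_right
  refine Finset.mem_image.mpr ⟨m-1, Finset.mem_range.mpr (by omega), ?_⟩
  rw [Nat.sub_add_cancel h1]

lemma mem_kbkf_C2j {n j : ℕ} (h1 : 1 ≤ j) (h2 : j ≤ n - 1) :
    ({(KV.x j, true), (KV.a j, false), (KV.x (j+1), false),
      (KV.y (j+1), false)} : Clause KV) ∈ kbkf n := by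
  rw [kbkf]
  apply Finset.mem_union_left
  apply Finset.mem_union_left
  apply Finset.mem_union_left
  apply Finset.mem_union_left
  apply Finset.mem_union_right
  refine Finset.mem_image.mpr ⟨j-1, Finset.mem_range.mpr (by omega), ?_⟩
  rw [Nat.sub_add_cancel h1, show j - 1 + 2 = j + 1 by omega]

lemma mem_kbkf_C1 {n : ℕ} :
    ({(KV.x 1, false), (KV.y 1, false)} : Clause KV) ∈ kbkf n := by
  rw [kbkf]
  apply Finset.mem_union_left
  apply Finset.mem_union_left
  apply Finset.mem_union_left
  apply Finset.mem_union_left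
  apply Finset.mem_union_left
  simp

lemma mem_kPsi {n j : ℕ} (h1 : 1 ≤ j) (h2 : j ≤ n) :
    ({(KV.x j, false), (KV.y j, true)} : Clause KV) ∈ kPsi n := by
  refine Finset.mem_image.mpr ⟨j-1, Finset.mem_range.mpr (by omega), ?_⟩
  rw [Nat.sub_add_cancel h1]

lemma isExist_x {n k : ℕ} (h1 : 1 ≤ k) (h2 : k ≤ n) : IsExist (kPrefix n) (KV.x k) := by
  unfold IsExist kPrefix
  rw [List.mem_append]
  left
  rw [List.mem_flatMap]
  exact ⟨k-1, List.mem_range.mpr (by omega), by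
    rw [Nat.sub_add_cancel h1]; simp⟩

lemma isExist_y {n k : ℕ} (h1 : 1 ≤ k) (h2 : k ≤ n) : IsExist (kPrefix n) (KV.y k) := by
  unfold IsExist kPrefix
  rw [List.mem_append]
  left
  rw [List.mem_flatMap]
  exact ⟨k-1, List.mem_range.mpr (by omega), by
    rw [Nat.sub_add_cancel h1]; simp⟩

lemma isExist_z {n k : ℕ} (h1 : 1 ≤ k) (h2 : k ≤ n) : IsExist (kPrefix n) (KV.z k) := by
  unfold IsExist kPrefix
  rw [List.mem_append]
  right
  rw [List.mem_map]
  exact ⟨k-1, List.mem_range.mpr (by omega), by rw [Nat.sub_add_cancel h1]⟩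

lemma isUniv_a {n k : ℕ} (h1 : 1 ≤ k) (h2 : k ≤ n) : IsUniv (kPrefix n) (KV.a k) := by
  unfold IsUniv kPrefix
  rw [List.mem_append]
  left
  rw [List.mem_flatMap]
  exact ⟨k-1, List.mem_range.mpr (by omega), by
    rw [Nat.sub_add_cancel h1]; simp⟩

lemma not_isExist_a {n k : ℕ} : ¬ IsExist (kPrefix n) (KV.a k) := by
  unfold IsExist kPrefix
  simp

lemma mem_Abar_a {k b n} (h : (KV.a k, b) ∈ Abar n) : 1 ≤ k ∧ k ≤ n ∧ b = false := by
  simp only [Abar, lA, Finset.mem_image, Finset.mem_Icc, Prod.ext_iff, KV.a.injEq] at h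
  obtain ⟨x, hx, rfl, hb⟩ := h
  exact ⟨hx.1, hx.2, hb.symm⟩
lemma mem_Abar_self {k : ℕ} (h : 1 ≤ k) : ((KV.a k, false) : Lit KV) ∈ Abar k := by
  simp only [Abar, lA, Finset.mem_image, Finset.mem_Icc]
  exact ⟨k, ⟨h, le_rfl⟩, rfl⟩

lemma mem_Abar_shape {n : ℕ} {l : Lit KV} (h : l ∈ Abar n) :
    ∃ x, 1 ≤ x ∧ x ≤ n ∧ l = (KV.a x, false) := by
  simp only [Abar, lA, Finset.mem_image, Finset.mem_Icc] at h
  obtain ⟨x, hx, rfl⟩ := h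
  exact ⟨x, hx.1, hx.2, rfl⟩

lemma zbar_mem_W {n i : ℕ} (h : i < n) : ((KV.z (i+1), false) : Lit KV) ∈ Wcl n i := by
  apply Finset.mem_insert_of_mem
  apply Finset.mem_insert_of_mem
  apply Finset.mem_union_right
  simp only [Zseg, Finset.mem_image, Finset.mem_Icc]
  exact ⟨i+1, ⟨le_rfl, by omega⟩, rfl⟩

end KBKFAux

open KBKFAux in
/-- KBKF_n with symmetry breaker ψₙ has a Q-Res refutation of at
most 4n R/U steps. -/
theorem kbkf_breaker_short_refutation : ∀ n : ℕ, 1 ≤ n →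
    ∃ D : List (Clause KV),
      IsRefutation (kPrefix n) (kbkf n ∪ kPsi n) D ∧ D.length ≤ 4 * n := by
  intro n hn
  refine ⟨(List.range (4*n)).map (fcl n), ⟨?_, ?_⟩, by simp⟩
  · intro i hi
    have hi4 : i < 4*n := by simpa using hi
    have hAvail : ∀ (j : ℕ), j < i →
        Avail (kbkf n ∪ kPsi n) ((List.range (4*n)).map (fcl n)) i (fcl n j) := by
      intro j hj
      have hlen : j < ((List.range (4*n)).map (fcl n)).length := by
        simp only [List.length_map, List.length_range]; omega
      exact Or.inr ⟨j, hj, hlen, by simp⟩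
    have hgoal : ((List.range (4*n)).map (fcl n))[i]'hi = fcl n i := by simp
    rw [hgoal]
    rcases lt_or_ge i n with hA | hA
    · -- base segment: resolve B_{2(i+1)} with W i on z_{i+1}
      left
      refine ⟨{(KV.a (i+1), false), (KV.z (i+1), true)}, Wcl n i,
        Or.inl (Finset.mem_union_left _ (mem_kbkf_B (by omega) (by omega))), ?_,
        KV.z (i+1), isExist_z (by omega) (by omega), by simp, zbar_mem_W hA, ?_, ?_⟩
      · rcases Nat.eq_zero_or_pos i with rfl | hpos
        · exact Or.inl (Finset.mem_union_left _ mem_kbkf_C2n)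
        · have h := hAvail (i-1) (by omega)
          rwa [fcl_eq_W (by omega : i-1 < n), show i-1+1 = i by omega] at h
      · rw [fcl_eq_W hA]; exact (L2 hA).symm
      · rw [fcl_eq_W hA]; exact nt_W
    rcases lt_or_ge i (3*n-2) with hB | hB
    · -- middle segment
      have hn2 : 2 ≤ n := by omega
      set t := i - n with ht
      set j := n - 1 - t/2 with hjdef
      have hj1 : 1 ≤ j := by omega
      have hj2 : j ≤ n - 1 := by omega
      rcases Nat.even_or_odd t with he | ho
      · -- E_j line
        have hmod : t % 2 = 0 := Nat.even_iff.mp he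
        have hieq : i = n + 2*(n-1-j) := by omega
        left
        refine ⟨{(KV.x (j+1), false), (KV.y (j+1), true)},
          {(KV.x j, true), (KV.a j, false), (KV.x (j+1), false), (KV.y (j+1), false)},
          Or.inl (Finset.mem_union_right _ (mem_kPsi (by omega) (by omega))),
          Or.inl (Finset.mem_union_left _ (mem_kbkf_C2j hj1 hj2)),
          KV.y (j+1), isExist_y (by omega) (by omega), by simp, by simp, ?_, ?_⟩
        · rw [hieq, fcl_eq_E hj1 hj2 hn2]; exact (L4 j).symm
        · rw [hieq, fcl_eq_E hj1 hj2 hn2]; exact nt_E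
      · -- V_j line
        have hmod : t % 2 = 1 := Nat.odd_iff.mp ho
        have hieq : i = n + 2*(n-1-j) + 1 := by omega
        left
        refine ⟨Vcl n (j+1), Ecl j, ?_, ?_, KV.x (j+1), isExist_x (by omega) (by omega),
          Finset.mem_insert_self _ _, by simp [Ecl], ?_, ?_⟩
        · by_cases hje : j = n - 1
          · have h := hAvail (n-1) (by omega)
            rw [fcl_eq_W (by omega), show n-1+1 = n by omega, L3 (by omega)] at h
            rwa [show j + 1 = n by omega]
          · have h := hAvail (i-2) (by omega)
            rwa [show i-2 = n + 2*(n-1-(j+1)) + 1 by omega,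
              fcl_eq_V (by omega) (by omega) hn2] at h
        · have h := hAvail (i-1) (by omega)
          rwa [show i-1 = n + 2*(n-1-j) by omega, fcl_eq_E hj1 hj2 hn2] at h
        · rw [hieq, fcl_eq_V hj1 hj2 hn2]; exact (L5 hj1 (by omega)).symm
        · rw [hieq, fcl_eq_V hj1 hj2 hn2]; exact nt_V
    rcases eq_or_lt_of_le hB with hC | hD
    · -- i = 3n-2 : unit x̄₁
      left
      refine ⟨{(KV.x 1, false), (KV.y 1, true)}, {(KV.x 1, false), (KV.y 1, false)},
        Or.inl (Finset.mem_union_right _ (mem_kPsi le_rfl hn)),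
        Or.inl (Finset.mem_union_left _ mem_kbkf_C1),
        KV.y 1, isExist_y le_rfl hn, by simp, by simp, ?_, ?_⟩
      · rw [← hC, fcl_eq_xbar hn]; exact L6.symm
      · rw [← hC, fcl_eq_xbar hn]; exact nt_single
    rcases eq_or_lt_of_le (show 3*n-1 ≤ i by omega) with hE | hF
    · -- i = 3n-1 : derive Abar n
      left
      refine ⟨Vcl n 1, {((KV.x 1, false) : Lit KV)}, ?_, ?_, KV.x 1, isExist_x le_rfl hn,
        Finset.mem_insert_self _ _, by simp, ?_, ?_⟩
      · by_cases hn1 : n = 1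
        · subst hn1
          have h := hAvail 0 (by omega)
          rwa [fcl_eq_W (by omega), show Wcl 1 (0+1) = Vcl 1 1 from L3 hn] at h
        · have h := hAvail (3*n-3) (by omega)
          rwa [show 3*n-3 = n + 2*(n-1-1) + 1 by omega,
            fcl_eq_V le_rfl (by omega) (by omega)] at h
      · have h := hAvail (3*n-2) (by omega)
        rwa [fcl_eq_xbar hn] at h
      · rw [← hE, fcl_eq_Abar le_rfl hn, show 4*n-1-(3*n-1) = n by omega]
        exact L7.symm
      · rw [← hE, fcl_eq_Abar le_rfl hn, show 4*n-1-(3*n-1) = n by omega]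
        exact nt_Abar
    · -- 3n ≤ i < 4n : universal reductions
      right
      refine ⟨Abar (4*n-i), ?_, (KV.a (4*n-i), false),
        isUniv_a (by omega) (by omega), mem_Abar_self (by omega), ?_, ?_, ?_⟩
      · have h := hAvail (i-1) (by omega)
        rwa [fcl_eq_Abar (by omega) hn, show 4*n-1-(i-1) = 4*n-i by omega] at h
      · intro hmem
        simp only [negLit] at hmem
        obtain ⟨x, _, _, hx⟩ := mem_Abar_shape hmem
        simp at hx
      · rw [fcl_eq_Abar (by omega) hn, show 4*n-1-i = 4*n-i-1 by omega]
        exact L8.symm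
      · intro m hm hex
        exfalso
        obtain ⟨x, _, _, rfl⟩ := mem_Abar_shape (Finset.mem_of_mem_erase hm)
        exact not_isExist_a hex
  · -- last element is the empty clause
    rw [List.getLast?_eq_getElem?]
    simp only [List.length_map, List.length_range]
    rw [List.getElem?_eq_getElem (by simp only [List.length_map, List.length_range]; omega)]
    simp only [List.getElem_map, List.getElem_range, Option.some.injEq]
    rw [fcl_eq_Abar (by omega) hn, show 4*n-1-(4*n-1) = 0 by omega]
    simp [Abar]
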